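/- For every connected finite unweighted graph G, the path-width of G is at most its minimum line-distortion: pw(G) ≤ ld(G). -/

import Mathlib

open SimpleGraph

variable {V : Type*}

/-- A path-decomposition of `G`: a finite sequence of bags `X 0, …, X (q-1)` such that
every vertex is in some bag, every edge has both ends in some bag, and
`X i ∩ X k ⊆ X j` whenever `i ≤ j ≤ k`. -/
def IsPathDecomp (G : SimpleGraph V) {q : ℕ} (X : Fin q → Set V) : Prop :=
  (∀ v : V, ∃ i, v ∈ X i) ∧
  (∀ u v : V, G.Adj u v → ∃ i, u ∈ X i ∧ v ∈ X i) ∧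
  (∀ i j k : Fin q, i ≤ j → j ≤ k → X i ∩ X k ⊆ X j)

/-- The length of the path-decomposition `X` is at most `l`:
every two vertices in a common bag are at distance at most `l` in `G`. -/
def DecompLengthLE (G : SimpleGraph V) {q : ℕ} (X : Fin q → Set V) (l : ℕ) : Prop :=
  ∀ i, ∀ u ∈ X i, ∀ v ∈ X i, G.dist u v ≤ l

/-- The breadth of the path-decomposition `X` is at most `r`:
every bag is contained in a disk of radius `r` of `G`. -/
def DecompBreadthLE (G : SimpleGraph V) {q : ℕ} (X : Fin q → Set V) (r : ℕ) : Prop :=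
  ∀ i, ∃ c : V, ∀ u ∈ X i, G.dist c u ≤ r

/-- The path-length `pl(G)`: minimum length over all path-decompositions of `G`. -/
noncomputable def pathLength (G : SimpleGraph V) : ℕ :=
  sInf {l | ∃ (q : ℕ) (X : Fin q → Set V), IsPathDecomp G X ∧ DecompLengthLE G X l}

/-- The path-breadth `pb(G)`: minimum breadth over all path-decompositions of `G`. -/
noncomputable def pathBreadth (G : SimpleGraph V) : ℕ :=
  sInf {r | ∃ (q : ℕ) (X : Fin q → Set V), IsPathDecomp G X ∧ DecompBreadthLE G X r}

/-- The path-width `pw(G)`: minimum over all path-decompositions of (max bag size − 1). -/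
noncomputable def pathWidth (G : SimpleGraph V) : ℕ :=
  sInf {w | ∃ (q : ℕ) (X : Fin q → Set V), IsPathDecomp G X ∧ ∀ i, (X i).ncard ≤ w + 1}

/-- `f` is a non-contractive embedding of `G` into the line with distortion at most `k`. -/
def IsLineEmbedding (G : SimpleGraph V) (k : ℕ) (f : V → ℝ) : Prop :=
  ∀ x y : V, (G.dist x y : ℝ) ≤ |f x - f y| ∧ |f x - f y| ≤ (k : ℝ) * (G.dist x y : ℝ)

/-- The minimum line-distortion `ld(G)`. -/
noncomputable def lineDistortion (G : SimpleGraph V) : ℕ :=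
  sInf {k | ∃ f : V → ℝ, IsLineEmbedding G k f}

/-- The bandwidth `bw(G)`: minimum over all layouts (bijections of the vertices
with `{0, …, n-1}`) of the maximum stretch of an edge. -/
noncomputable def bandwidth (G : SimpleGraph V) [Fintype V] : ℕ :=
  sInf {b | ∃ f : V ≃ Fin (Fintype.card V),
    ∀ u v : V, G.Adj u v → Nat.dist (f u : ℕ) (f v : ℕ) ≤ b}

/-- Every path of `G` from `a` to `b` meets the disk of radius `lam` around `c`. -/
def Intercepts (G : SimpleGraph V) (lam : ℕ) (c a b : V) : Prop :=
  ∀ p : G.Walk a b, p.IsPath → ∃ z ∈ p.support, G.dist c z ≤ lam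

/-- The walk `p` avoids the closed neighborhood of `c`. -/
def WalkAvoids (G : SimpleGraph V) {x y : V} (p : G.Walk x y) (c : V) : Prop :=
  ∀ z ∈ p.support, z ≠ c ∧ ¬ G.Adj c z

/-- `a, b, c` form an asteroidal triple of `G`: pairwise non-adjacent, and every two
of them are joined by a path avoiding the closed neighborhood of the third. -/
def IsAsteroidalTriple (G : SimpleGraph V) (a b c : V) : Prop :=
  a ≠ b ∧ a ≠ c ∧ b ≠ c ∧ ¬ G.Adj a b ∧ ¬ G.Adj a c ∧ ¬ G.Adj b c ∧
  (∃ p : G.Walk a b, p.IsPath ∧ WalkAvoids G p c) ∧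
  (∃ p : G.Walk a c, p.IsPath ∧ WalkAvoids G p b) ∧
  (∃ p : G.Walk b c, p.IsPath ∧ WalkAvoids G p a)

/-- `G` is AT-free: it has no asteroidal triple. -/
def ATFree (G : SimpleGraph V) : Prop :=
  ∀ a b c : V, ¬ IsAsteroidalTriple G a b c

theorem stmt9 [Fintype V] (G : SimpleGraph V) (hG : G.Connected) :
    pathWidth G ≤ lineDistortion G := by
  classical
  set n := Fintype.card V with hn
  set e := Fintype.equivFin V with he
  -- the set of achievable distortions is nonempty
  have hne : {k | ∃ f : V → ℝ, IsLineEmbedding G k f}.Nonempty := by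
    refine ⟨n * n, fun v => (n : ℝ) * ((e v : ℕ) : ℝ), ?_⟩
    intro x y
    rcases eq_or_ne x y with rfl | hxy
    · simp only [SimpleGraph.dist_self, Nat.cast_zero, sub_self, abs_zero, mul_zero]
      exact ⟨le_refl _, le_refl _⟩
    · have h1 : 1 ≤ G.dist x y := hG.pos_dist_of_ne hxy
      have hdlt : G.dist x y < n := by
        obtain ⟨w⟩ := hG x y
        exact lt_of_le_of_lt (SimpleGraph.dist_le w.bypass)
          (SimpleGraph.Walk.IsPath.length_lt w.bypass_isPath)
      have hidx : (e x : ℕ) ≠ (e y : ℕ) := by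
        intro h
        exact hxy (e.injective (Fin.ext h))
      have hix : (e x : ℕ) < n := (e x).2
      have hiy : (e y : ℕ) < n := (e y).2
      have habs1 : (1 : ℝ) ≤ |((e x : ℕ) : ℝ) - ((e y : ℕ) : ℝ)| := by
        rcases lt_or_gt_of_ne hidx with h | h
        · have hsucc : ((e x : ℕ) : ℝ) + 1 ≤ ((e y : ℕ) : ℝ) := by exact_mod_cast h
          have hlt : ((e x : ℕ) : ℝ) < ((e y : ℕ) : ℝ) := by linarith
          rw [abs_sub_comm, abs_of_pos (by linarith)]
          linarith
        · have hsucc : ((e y : ℕ) : ℝ) + 1 ≤ ((e x : ℕ) : ℝ) := by exact_mod_cast h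
          rw [abs_of_pos (by linarith)]
          linarith
      have habs2 : |((e x : ℕ) : ℝ) - ((e y : ℕ) : ℝ)| ≤ (n : ℝ) := by
        have h1' : ((e x : ℕ) : ℝ) ≤ (n : ℝ) := by exact_mod_cast hix.le
        have h2' : ((e y : ℕ) : ℝ) ≤ (n : ℝ) := by exact_mod_cast hiy.le
        have h3' : (0:ℝ) ≤ ((e x : ℕ) : ℝ) := Nat.cast_nonneg _
        have h4' : (0:ℝ) ≤ ((e y : ℕ) : ℝ) := Nat.cast_nonneg _
        rw [abs_sub_le_iff]
        constructor <;> linarith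
      have hfact : (n : ℝ) * ((e x : ℕ) : ℝ) - (n : ℝ) * ((e y : ℕ) : ℝ)
          = (n : ℝ) * (((e x : ℕ) : ℝ) - ((e y : ℕ) : ℝ)) := by ring
      have hnn : (0:ℝ) ≤ (n : ℝ) := Nat.cast_nonneg _
      rw [hfact, abs_mul, abs_of_nonneg hnn]
      constructor
      · have hd : (G.dist x y : ℝ) ≤ (n : ℝ) := by exact_mod_cast hdlt.le
        nlinarith
      · have hd1 : (1:ℝ) ≤ (G.dist x y : ℝ) := by exact_mod_cast h1
        push_cast
        nlinarith
  obtain ⟨f, hf⟩ := Nat.sInf_mem hne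
  set k := lineDistortion G with hk
  apply Nat.sInf_le
  set σ := Tuple.sort (fun i => f (e.symm i)) with hσ
  set vtx : Fin n → V := fun i => e.symm (σ i) with hvtx
  have hmono : Monotone (fun i => f (vtx i)) := by
    have := Tuple.monotone_sort (fun i => f (e.symm i))
    exact this
  have hvtx_surj : ∀ v : V, vtx (σ.symm (e v)) = v := by
    intro v; simp [hvtx]
  have hsep : ∀ u v : V, u ≠ v → (1:ℝ) ≤ |f u - f v| := by
    intro u v huv
    have h1 : 1 ≤ G.dist u v := hG.pos_dist_of_ne huv
    calc (1:ℝ) ≤ (G.dist u v : ℝ) := by exact_mod_cast h1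
      _ ≤ |f u - f v| := (hf u v).1
  have hknn : (0:ℝ) ≤ (k : ℝ) := Nat.cast_nonneg _
  refine ⟨n, fun i => {v | f (vtx i) ≤ f v ∧ f v ≤ f (vtx i) + (k:ℝ)}, ⟨?_, ?_, ?_⟩, ?_⟩
  · intro v
    refine ⟨σ.symm (e v), ?_⟩
    show f (vtx _) ≤ f v ∧ f v ≤ f (vtx _) + (k:ℝ)
    rw [hvtx_surj v]
    exact ⟨le_refl _, by linarith⟩
  · intro u v huv
    have hd1 : G.dist u v = 1 := SimpleGraph.dist_eq_one_iff_adj.mpr huv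
    have habs : |f u - f v| ≤ (k:ℝ) := by
      have := (hf u v).2
      rw [hd1] at this
      rw [Nat.cast_one, mul_one] at this; exact this
    rw [abs_sub_le_iff] at habs
    rcases le_total (f u) (f v) with hle | hle
    · refine ⟨σ.symm (e u), ?_, ?_⟩
      · show f (vtx _) ≤ f u ∧ f u ≤ f (vtx _) + (k:ℝ)
        rw [hvtx_surj u]
        exact ⟨le_refl _, by linarith⟩
      · show f (vtx _) ≤ f v ∧ f v ≤ f (vtx _) + (k:ℝ)
        rw [hvtx_surj u]
        exact ⟨hle, by linarith [habs.2]⟩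
    · refine ⟨σ.symm (e v), ?_, ?_⟩
      · show f (vtx _) ≤ f u ∧ f u ≤ f (vtx _) + (k:ℝ)
        rw [hvtx_surj v]
        exact ⟨hle, by linarith [habs.1]⟩
      · show f (vtx _) ≤ f v ∧ f v ≤ f (vtx _) + (k:ℝ)
        rw [hvtx_surj v]
        exact ⟨le_refl _, by linarith⟩
  · intro i j l hij hjl v hv
    obtain ⟨⟨hi1, hi2⟩, ⟨hl1, hl2⟩⟩ := hv
    have h1 := hmono hij
    have h2 := hmono hjl
    simp only at h1 h2
    exact ⟨le_trans h2 hl1, by linarith⟩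
  · intro i
    set c := f (vtx i) with hc
    have hsub : {v | f (vtx i) ≤ f v ∧ f v ≤ f (vtx i) + (k:ℝ)}.ncard
        ≤ ((Finset.range (k+1) : Finset ℕ) : Set ℕ).ncard := by
      apply Set.ncard_le_ncard_of_injOn (fun v => (⌊f v - c⌋).toNat)
      · intro v hv
        obtain ⟨h1, h2⟩ := hv
        have hle : f v - c ≤ (k:ℝ) := by rw [hc]; linarith
        have hfl : ⌊f v - c⌋ ≤ (k : ℤ) := by
          have h3 := Int.floor_le (f v - c)
          have h4 : ((⌊f v - c⌋ : ℤ) : ℝ) ≤ ((k:ℤ) : ℝ) := by push_cast; linarith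
          exact_mod_cast h4
        simp only [Finset.coe_range, Set.mem_Iio]
        have : (⌊f v - c⌋).toNat ≤ k := by
          rw [Int.toNat_le]; exact_mod_cast hfl
        omega
      · intro u hu v hv hguv
        by_contra huv
        have h1 := hsep u v huv
        have hnu : (0:ℝ) ≤ f u - c := by rw [hc]; linarith [hu.1]
        have hnv : (0:ℝ) ≤ f v - c := by rw [hc]; linarith [hv.1]
        have hfu : (0:ℤ) ≤ ⌊f u - c⌋ := Int.floor_nonneg.mpr hnu
        have hfv : (0:ℤ) ≤ ⌊f v - c⌋ := Int.floor_nonneg.mpr hnv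
        have heq : ⌊f u - c⌋ = ⌊f v - c⌋ := by
          have h5 : ((⌊f u - c⌋).toNat : ℤ) = ((⌊f v - c⌋).toNat : ℤ) := by
            exact_mod_cast hguv
          rwa [Int.toNat_of_nonneg hfu, Int.toNat_of_nonneg hfv] at h5
        have h2 : |f u - f v| < 1 := by
          have hu1 := Int.floor_le (f u - c)
          have hu2 := Int.lt_floor_add_one (f u - c)
          have hv1 := Int.floor_le (f v - c)
          have hv2 := Int.lt_floor_add_one (f v - c)
          rw [heq] at hu1 hu2
          rw [abs_sub_lt_iff]
          constructor <;> linarith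
        linarith
    rw [Set.ncard_coe_finset, Finset.card_range] at hsub
    exact hsub
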